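/- Let H be a real Hilbert space, C a nonempty subset of H, and T : C → H any mapping. Then the set of attractive points A(T) is a convex subset of H. -/

import Mathlib

theorem attractive_points_convex
    {H : Type*} [NormedAddCommGroup H] [InnerProductSpace ℝ H] [CompleteSpace H]
    (C : Set H) (hC : C.Nonempty) (T : H → H) :
    Convex ℝ {z : H | ∀ x ∈ C, ‖T x - z‖ ≤ ‖x - z‖} := by
  intro z1 hz1 z2 hz2 a b ha hb hab x hx
  have h1 := hz1 x hx
  have h2 := hz2 x hx
  have sq1 : ‖T x - z1‖ ^ 2 ≤ ‖x - z1‖ ^ 2 :=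
    pow_le_pow_left₀ (norm_nonneg _) h1 2
  have sq2 : ‖T x - z2‖ ^ 2 ≤ ‖x - z2‖ ^ 2 :=
    pow_le_pow_left₀ (norm_nonneg _) h2 2
  have expand : ∀ y z : H, ‖y - z‖ ^ 2 = ‖y‖ ^ 2 - 2 * inner ℝ y z + ‖z‖ ^ 2 := by
    intro y z
    rw [@norm_sub_sq_real]
  simp only [expand] at sq1 sq2
  have goal_sq : ‖T x - (a • z1 + b • z2)‖ ^ 2 ≤ ‖x - (a • z1 + b • z2)‖ ^ 2 := by
    rw [expand, expand, inner_add_right, inner_add_right,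
      real_inner_smul_right, real_inner_smul_right,
      real_inner_smul_right, real_inner_smul_right]
    nlinarith [sq1, sq2, mul_le_mul_of_nonneg_left sq1 ha,
      mul_le_mul_of_nonneg_left sq2 hb]
  calc ‖T x - (a • z1 + b • z2)‖
      = Real.sqrt (‖T x - (a • z1 + b • z2)‖ ^ 2) := by
        rw [Real.sqrt_sq (norm_nonneg _)]
    _ ≤ Real.sqrt (‖x - (a • z1 + b • z2)‖ ^ 2) := Real.sqrt_le_sqrt goal_sq
    _ = ‖x - (a • z1 + b • z2)‖ := Real.sqrt_sq (norm_nonneg _)
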